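/- arXiv:2402.00982 — 2 statements merged into one kernel-verified Lean document; each statement's English description precedes it below -/
import Mathlib

section
/- If an NRTSS ℛ is in equivariant format, then the transition relation induced by ℛ is equivariant: whenever the transition NT⟦s⟧→NT⟦r⟧ is provable in ℛ and π is a finite permutation of atoms, the transition π·NT⟦s⟧→π·NT⟦r⟧ is also provable in ℛ; hence ℛ induces a nominal residual transition system (NRTS), i.e., a triple (S, R, →) of nominal sets S of states and R of residuals together with an equivariant relation → ⊆ S × R. -/
set_option maxHeartbeats 1000000

/-- Atoms: a countably infinite set. -/
abbrev Atom : Type := ℕ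

/-- The subgroup of `Equiv.Perm Atom` consisting of the finite permutations,
i.e. those moving only finitely many atoms. -/
def finPermSubgroup : Subgroup (Equiv.Perm Atom) where
  carrier := {π : Equiv.Perm Atom | {a : Atom | π a ≠ a}.Finite}
  one_mem' := by
    have h : {a : Atom | (1 : Equiv.Perm Atom) a ≠ a} = ∅ := by ext a; simp
    simp only [Set.mem_setOf_eq, h]
    exact Set.finite_empty
  mul_mem' := by
    intro π σ hπ hσ
    refine (hπ.union hσ).subset ?_
    intro a ha
    simp only [Set.mem_setOf_eq, Equiv.Perm.mul_apply] at ha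
    by_cases h : σ a = a
    · exact Or.inl (by simp only [Set.mem_setOf_eq]; rwa [h] at ha)
    · exact Or.inr h
  inv_mem' := by
    intro π hπ
    refine (hπ.image (⇑π⁻¹)).subset ?_
    intro a ha
    simp only [Set.mem_setOf_eq] at ha
    have h1 : π a ≠ a := by
      intro h
      apply ha
      conv_lhs => rw [← h]
      simp
    exact ⟨π a, fun h => h1 (π.injective h), by simp⟩

/-- Finite permutations of atoms. -/
abbrev FinPerm : Type := finPermSubgroup

/-- The transposition of two atoms, as a finite permutation. -/
def swapPerm (a b : Atom) : FinPerm :=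
  ⟨Equiv.swap a b, by
    refine ((Set.finite_singleton b).insert a).subset ?_
    intro x hx
    simp only [Set.mem_setOf_eq] at hx
    by_contra h
    simp only [Set.mem_insert_iff, Set.mem_singleton_iff, not_or] at h
    exact hx (Equiv.swap_apply_of_ne_of_ne h.1 h.2)⟩

/-- Raw terms over a nominal signature (with set of function symbols `F`) and a set `V`
of variables: variables, atoms, moderated terms (explicit permutations), atom
abstractions, (binary-encoded, with empty product `unit`) products, and data built
with function symbols. -/
inductive RawTerm (V F : Type) : Type
  | var : V → RawTerm V F
  | atom : Atom → RawTerm V F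
  | mod : FinPerm → RawTerm V F → RawTerm V F
  | abs : Atom → RawTerm V F → RawTerm V F
  | unit : RawTerm V F
  | pair : RawTerm V F → RawTerm V F → RawTerm V F
  | app : F → RawTerm V F → RawTerm V F

variable {V F : Type}

/-- The permutation action on raw terms: `π·x = x`, `π·a = π a`,
`π·(π₁·t) = (π ∘ π₁ ∘ π⁻¹)·(π·t)`, `π·[a]t = [π a](π·t)`, componentwise on products,
`π·f(t) = f(π·t)`. -/
def permTerm (π : FinPerm) : RawTerm V F → RawTerm V F
  | .var x => .var x
  | .atom a => .atom (π.1 a)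
  | .mod π₁ t => .mod (π * π₁ * π⁻¹) (permTerm π t)
  | .abs a t => .abs (π.1 a) (permTerm π t)
  | .unit => .unit
  | .pair t s => .pair (permTerm π t) (permTerm π s)
  | .app f t => .app f (permTerm π t)

/-- A raw term is ground iff no variables occur in it. -/
def IsGround : RawTerm V F → Prop
  | .var _ => False
  | .atom _ => True
  | .mod _ t => IsGround t
  | .abs _ t => IsGround t
  | .unit => True
  | .pair t s => IsGround t ∧ IsGround s
  | .app _ t => IsGround t

/-- The extension `φ̄` of a substitution `φ` to raw terms, defined homomorphically. -/
def ext (φ : V → RawTerm V F) : RawTerm V F → RawTerm V F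
  | .var x => φ x
  | .atom a => .atom a
  | .mod π t => .mod π (ext φ t)
  | .abs a t => .abs a (ext φ t)
  | .unit => .unit
  | .pair t s => .pair (ext φ t) (ext φ s)
  | .app f t => .app f (ext φ t)

/-- A substitution (i.e. a function from variables to raw terms; permutations act on it
by conjugation, fixing the variables) is finitely supported. -/
def FinSuppSubst (φ : V → RawTerm V F) : Prop :=
  ∃ A : Set Atom, A.Finite ∧
    ∀ π : FinPerm, (∀ a ∈ A, π.1 a = a) → ∀ x, permTerm π (φ x) = φ x

/-- A set of atoms supports a substitution (w.r.t. the conjugation action on functions,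
variables being fixed by permutations). -/
def SupportsSubst (A : Set Atom) (φ : V → RawTerm V F) : Prop :=
  ∀ π : FinPerm, (∀ a ∈ A, π.1 a = a) → ∀ x, permTerm π (φ x) = φ x

/-- A set of atoms supports a function from raw terms to raw terms
(w.r.t. the conjugation action on functions). -/
def SupportsFunRT (A : Set Atom) (g : RawTerm V F → RawTerm V F) : Prop :=
  ∀ π : FinPerm, (∀ a ∈ A, π.1 a = a) → ∀ t, permTerm π (g (permTerm π⁻¹ t)) = g t

/-- A ground substitution: it maps every variable to a ground term. -/
def GroundSubst (φ : V → RawTerm V F) : Prop := ∀ x, IsGround (φ x)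

/-- `freshN a p` expresses, for a ground term `p`, that the atom `a` is fresh in
(i.e. not in the support of) the nominal term `NT⟦p⟧` denoted by `p`. -/
def freshN (a : Atom) : RawTerm V F → Prop
  | .var _ => True
  | .atom b => a ≠ b
  | .mod π t => freshN (π⁻¹.1 a) t
  | .abs b t => a = b ∨ freshN a t
  | .unit => True
  | .pair t s => freshN a t ∧ freshN a s
  | .app _ t => freshN a t

/-- Alpha-equivalence of raw terms: two (ground) raw terms are related iff they denote
the same nominal term; moderated terms are identified with the result of applying the
delayed permutation. -/
inductive Aeq : RawTerm V F → RawTerm V F → Prop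
  | var (x : V) : Aeq (.var x) (.var x)
  | atom (a : Atom) : Aeq (.atom a) (.atom a)
  | unit : Aeq .unit .unit
  | pair {t₁ t₂ s₁ s₂ : RawTerm V F} : Aeq t₁ s₁ → Aeq t₂ s₂ →
      Aeq (.pair t₁ t₂) (.pair s₁ s₂)
  | app (f : F) {t s : RawTerm V F} : Aeq t s → Aeq (.app f t) (.app f s)
  | abs_same (a : Atom) {t s : RawTerm V F} : Aeq t s → Aeq (.abs a t) (.abs a s)
  | abs_diff {a b : Atom} {t s : RawTerm V F} : a ≠ b → freshN a s →
      Aeq t (permTerm (swapPerm a b) s) → Aeq (.abs a t) (.abs b s)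
  | mod_left {π : FinPerm} {t s : RawTerm V F} : Aeq (permTerm π t) s → Aeq (.mod π t) s
  | mod_right {π : FinPerm} {t s : RawTerm V F} : Aeq t (permTerm π s) → Aeq t (.mod π s)

attribute [local instance] Classical.propDecidable

/-- A transition rule `H, ∇ / t → t'` of a nominal residual transition system
specification: a set `H` of premisses (formulas between raw terms), a finite freshness
environment `∇` of freshness assertions `a ≉ v`, and a conclusion with source `t` and
target `t'`. -/
structure Rule (V F : Type) where
  prem : Set (RawTerm V F × RawTerm V F)
  env : Finset (Atom × RawTerm V F)
  src : RawTerm V F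
  tgt : RawTerm V F

/-- The (componentwise) permutation action on rules. -/
noncomputable def permRule (π : FinPerm) (Ru : Rule V F) : Rule V F where
  prem := (fun u => (permTerm π u.1, permTerm π u.2)) '' Ru.prem
  env := Ru.env.image (fun e => (π.1 e.1, permTerm π e.2))
  src := permTerm π Ru.src
  tgt := permTerm π Ru.tgt

/-- A set of atoms supports a set of formulas (premisses), w.r.t. the pointwise
permutation action. -/
def SupportsPrem (A : Set Atom) (H : Set (RawTerm V F × RawTerm V F)) : Prop :=
  ∀ π : FinPerm, (∀ a ∈ A, π.1 a = a) →
    (fun u => (permTerm π u.1, permTerm π u.2)) '' H = H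

/-- An NRTSS `R` is in equivariant format iff it is closed under applying
transpositions of atoms to its rules. -/
def EquivariantFormat (R : Set (Rule V F)) : Prop :=
  ∀ Ru ∈ R, ∀ a b : Atom, permRule (swapPerm a b) Ru ∈ R

/-- Provability of a transition in the NRTSS `R`.  Transitions relate nominal terms,
i.e. alpha-equivalence classes of ground raw terms; here they are represented by ground
raw terms and the relation is saturated under alpha-equivalence (`Aeq`).
`Provable R p r` holds iff the transition `NT⟦p⟧ → NT⟦r⟧` has a proof tree in `R`:
there are a rule of `R` and a ground substitution `φ` whose instance of the conclusion
denotes `NT⟦p⟧ → NT⟦r⟧`, such that all instantiated premisses are provable and all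
instantiated freshness assertions `a ≉ v` represent true freshness relations
`a # NT⟦φ(v)⟧`. -/
inductive Provable (R : Set (Rule V F)) : RawTerm V F → RawTerm V F → Prop
  | step (Ru : Rule V F) (hRu : Ru ∈ R) (φ : V → RawTerm V F) (hφ : GroundSubst φ)
      (p r : RawTerm V F)
      (hsrc : Aeq (ext φ Ru.src) p) (htgt : Aeq (ext φ Ru.tgt) r)
      (hprem : ∀ u ∈ Ru.prem, Provable R (ext φ u.1) (ext φ u.2))
      (henv : ∀ e ∈ Ru.env, freshN e.1 (ext φ e.2)) :
      Provable R p r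

section Lemmas
variable {V F : Type}

lemma coe_mul_apply (π σ : FinPerm) (a : Atom) : (π * σ).1 a = π.1 (σ.1 a) := rfl
lemma coe_inv_apply (π : FinPerm) (a : Atom) : (π⁻¹).1 a = π.1⁻¹ a := rfl

lemma permTerm_one (t : RawTerm V F) : permTerm 1 t = t := by
  induction t with
  | var x => rfl
  | atom a => rfl
  | mod π₁ t ih => simp [permTerm, ih]
  | abs a t ih => simp [permTerm, ih]
  | unit => rfl
  | pair t s iht ihs => simp [permTerm, iht, ihs]
  | app f t ih => simp [permTerm, ih]

lemma permTerm_mul (π σ : FinPerm) (t : RawTerm V F) :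
    permTerm (π * σ) t = permTerm π (permTerm σ t) := by
  induction t with
  | var x => rfl
  | atom a => simp [permTerm, coe_mul_apply]
  | mod π₁ t ih => simp [permTerm, ih, mul_assoc]
  | abs a t ih => simp [permTerm, ih, coe_mul_apply]
  | unit => rfl
  | pair t s iht ihs => simp [permTerm, iht, ihs]
  | app f t ih => simp [permTerm, ih]

lemma isGround_perm (π : FinPerm) {t : RawTerm V F} (h : IsGround t) :
    IsGround (permTerm π t) := by
  induction t with
  | var x => exact h
  | atom a => trivial
  | mod π₁ t ih => exact ih h
  | abs a t ih => exact ih h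
  | unit => trivial
  | pair t s iht ihs => exact ⟨iht h.1, ihs h.2⟩
  | app f t ih => exact ih h

lemma freshN_perm (π : FinPerm) : ∀ {t : RawTerm V F} {a : Atom},
    freshN a t → freshN (π.1 a) (permTerm π t) := by
  intro t
  induction t with
  | var x => intro a _; trivial
  | atom b => intro a h hc; exact h (π.1.injective hc)
  | mod π₁ t ih =>
      intro a h
      show freshN (((π * π₁ * π⁻¹)⁻¹).1 (π.1 a)) (permTerm π t)
      have : ((π * π₁ * π⁻¹)⁻¹).1 (π.1 a) = π.1 (π₁⁻¹.1 a) := by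
        simp [coe_mul_apply, coe_inv_apply]
      rw [this]
      exact ih h
  | abs b t ih =>
      intro a h
      rcases h with h | h
      · exact Or.inl (by rw [h])
      · exact Or.inr (ih h)
  | unit => intro a _; trivial
  | pair t s iht ihs => intro a h; exact ⟨iht h.1, ihs h.2⟩
  | app f t ih => intro a h; exact ih h

lemma ext_perm (π : FinPerm) (φ : V → RawTerm V F) (t : RawTerm V F) :
    ext (fun x => permTerm π (φ x)) (permTerm π t) = permTerm π (ext φ t) := by
  induction t with
  | var x => rfl
  | atom a => rfl
  | mod π₁ t ih => simp [permTerm, ext, ih]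
  | abs a t ih => simp [permTerm, ext, ih]
  | unit => rfl
  | pair t s iht ihs => simp [permTerm, ext, iht, ihs]
  | app f t ih => simp [permTerm, ext, ih]

lemma swapPerm_conj (π : FinPerm) (a b : Atom) :
    swapPerm (π.1 a) (π.1 b) = π * swapPerm a b * π⁻¹ := by
  apply Subtype.ext
  exact Equiv.swap_apply_apply π.1 a b

lemma aeq_perm (π : FinPerm) {t s : RawTerm V F} (h : Aeq t s) :
    Aeq (permTerm π t) (permTerm π s) := by
  induction h with
  | var x => exact Aeq.var x
  | atom a => exact Aeq.atom _
  | unit => exact Aeq.unit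
  | pair h1 h2 ih1 ih2 => exact Aeq.pair ih1 ih2
  | app f h ih => exact Aeq.app f ih
  | abs_same a h ih => exact Aeq.abs_same _ ih
  | abs_diff hab hf h ih =>
      refine Aeq.abs_diff (fun hc => hab (π.1.injective hc)) (freshN_perm π hf) ?_
      have key : ∀ (a b : Atom) (s : RawTerm V F),
          permTerm (swapPerm (π.1 a) (π.1 b)) (permTerm π s)
            = permTerm π (permTerm (swapPerm a b) s) := by
        intro a b s
        rw [← permTerm_mul, ← permTerm_mul, swapPerm_conj]
        congr 1
        group
      rw [key]
      exact ih
  | @mod_left π₁ t₁ s₁ h ih =>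
      apply Aeq.mod_left
      have : permTerm (π * π₁ * π⁻¹) (permTerm π t₁) = permTerm π (permTerm π₁ t₁) := by
        rw [← permTerm_mul, ← permTerm_mul]
        congr 1
        group
      rw [show permTerm (π * π₁ * π⁻¹) (permTerm π t₁) = permTerm π (permTerm π₁ t₁) from this]
      exact ih
  | @mod_right π₁ t₁ s₁ h ih =>
      apply Aeq.mod_right
      have : permTerm (π * π₁ * π⁻¹) (permTerm π s₁) = permTerm π (permTerm π₁ s₁) := by
        rw [← permTerm_mul, ← permTerm_mul]
        congr 1
        group
      rw [this]
      exact ih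

lemma permRule_one (Ru : Rule V F) : permRule 1 Ru = Ru := by
  cases Ru with
  | mk prem env src tgt =>
    have h1 : (fun u : RawTerm V F × RawTerm V F =>
        (permTerm (1:FinPerm) u.1, permTerm 1 u.2)) '' prem = prem := by
      have heq : (fun u : RawTerm V F × RawTerm V F =>
          (permTerm (1:FinPerm) u.1, permTerm 1 u.2)) = id := by
        funext u; simp [permTerm_one]
      rw [heq, Set.image_id]
    have h2 : Finset.image (fun e : Atom × RawTerm V F =>
        ((1:FinPerm).1 e.1, permTerm 1 e.2)) env = env := by
      have heq : (fun e : Atom × RawTerm V F =>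
          ((1:FinPerm).1 e.1, permTerm 1 e.2)) = id := by
        funext e; simp [permTerm_one]
      rw [heq, Finset.image_id]
    simp only [permRule]
    rw [Rule.mk.injEq]
    exact ⟨h1, h2, permTerm_one _, permTerm_one _⟩

lemma permRule_mul (π σ : FinPerm) (Ru : Rule V F) :
    permRule (π * σ) Ru = permRule π (permRule σ Ru) := by
  cases Ru with
  | mk prem env src tgt =>
    simp only [permRule]
    rw [Rule.mk.injEq]
    refine ⟨?_, ?_, permTerm_mul _ _ _, permTerm_mul _ _ _⟩
    · rw [Set.image_image]
      apply Set.image_congr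
      intro u _
      simp [permTerm_mul]
    · rw [Finset.image_image]
      apply Finset.image_congr
      intro e _
      simp [Function.comp, permTerm_mul, coe_mul_apply]

lemma finperm_swap_induction (P : FinPerm → Prop) (h1 : P 1)
    (hswap : ∀ π (a b : Atom), P π → P (swapPerm a b * π)) (π : FinPerm) : P π := by
  have hfin : ∀ σ : FinPerm, ({a : Atom | σ.1 a ≠ a}).Finite := fun σ => σ.2
  suffices h : ∀ n : ℕ, ∀ σ : FinPerm, (hfin σ).toFinset.card ≤ n → P σ from
    h _ π le_rfl
  intro n
  induction n with
  | zero =>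
      intro σ hσ
      have : σ = 1 := by
        apply Subtype.ext; apply Equiv.ext; intro a
        by_contra hc
        have ha : a ∈ (hfin σ).toFinset := by simp [Set.Finite.mem_toFinset]; exact hc
        have := Finset.card_pos.mpr ⟨a, ha⟩
        omega
      exact this ▸ h1
  | succ n ih =>
      intro σ hσ
      by_cases hσ1 : σ = 1
      · exact hσ1 ▸ h1
      · obtain ⟨a, ha⟩ : ∃ a, σ.1 a ≠ a := by
          by_contra hc
          push_neg at hc
          exact hσ1 (Subtype.ext (Equiv.ext hc))
        set b := σ.1 a with hb
        set τ : FinPerm := swapPerm a b * σ with hτdef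
        have hστ : σ = swapPerm a b * τ := by
          rw [hτdef, ← mul_assoc]
          have : swapPerm a b * swapPerm a b = 1 := by
            apply Subtype.ext
            simp [swapPerm, Equiv.swap_mul_self]
          rw [this, one_mul]
        have hsub : (hfin τ).toFinset ⊆ (hfin σ).toFinset.erase a := by
          intro c hc
          simp only [Set.Finite.mem_toFinset, Set.mem_setOf_eq] at hc
          have hca : c ≠ a := by
            intro h
            apply hc
            rw [h]
            show (swapPerm a b).1 (σ.1 a) = a
            simp [swapPerm, ← hb]
          rw [Finset.mem_erase]
          refine ⟨hca, ?_⟩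
          simp only [Set.Finite.mem_toFinset, Set.mem_setOf_eq]
          intro hcc
          apply hc
          show (swapPerm a b).1 (σ.1 c) = c
          rw [hcc]
          have hcb : c ≠ b := by
            intro h
            rw [h] at hcc
            exact ha (σ.1.injective (hcc.trans hb))
          simp [swapPerm, Equiv.swap_apply_of_ne_of_ne hca hcb]
        have hacard : (hfin τ).toFinset.card ≤ n := by
          have h1' : a ∈ (hfin σ).toFinset := by
            simp only [Set.Finite.mem_toFinset, Set.mem_setOf_eq]; exact ha
          have := Finset.card_le_card hsub
          have := Finset.card_erase_of_mem h1'
          omega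
        rw [hστ]
        exact hswap τ a b (ih τ hacard)

end Lemmas

/-- If an NRTSS `R` is in equivariant format then the transition
relation induced by `R` (on nominal terms, here represented by ground raw terms up to
alpha-equivalence) is equivariant: whenever `NT⟦p⟧ → NT⟦r⟧` is provable in `R` and `π`
is a finite permutation of atoms, `π·NT⟦p⟧ → π·NT⟦r⟧` is also provable in `R`.  Hence
`R` induces a nominal residual transition system. -/
theorem equivariant_format_induces_NRTS {V F : Type} (R : Set (Rule V F))
    (hfs : ∀ Ru ∈ R, ∃ A : Set Atom, A.Finite ∧ SupportsPrem A Ru.prem)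
    (hEq : EquivariantFormat R) :
    ∀ p r : RawTerm V F, Provable R p r →
      ∀ π : FinPerm, Provable R (permTerm π p) (permTerm π r) := by
  have hmem : ∀ Ru ∈ R, ∀ π : FinPerm, permRule π Ru ∈ R := by
    intro Ru hRu π
    refine finperm_swap_induction (fun π => permRule π Ru ∈ R) ?_ ?_ π
    · show permRule (1:FinPerm) Ru ∈ R
      rw [permRule_one]; exact hRu
    · intro σ a b h
      show permRule (swapPerm a b * σ) Ru ∈ R
      rw [permRule_mul]
      exact hEq _ h a b
  intro p r h
  induction h with
  | step Ru hRu φ hφ p r hsrc htgt hprem henv ih =>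
      intro π
      refine Provable.step (permRule π Ru) (hmem Ru hRu π) (fun x => permTerm π (φ x))
        (fun x => isGround_perm π (hφ x)) _ _ ?_ ?_ ?_ ?_
      · show Aeq (ext _ (permTerm π Ru.src)) _
        rw [ext_perm]; exact aeq_perm π hsrc
      · show Aeq (ext _ (permTerm π Ru.tgt)) _
        rw [ext_perm]; exact aeq_perm π htgt
      · rintro u ⟨u₀, hu₀, rfl⟩
        simp only
        rw [ext_perm, ext_perm]
        exact ih u₀ hu₀ π
      · intro e he
        simp only [permRule, Finset.mem_image] at he
        obtain ⟨e₀, he₀, rfl⟩ := he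
        simp only
        rw [ext_perm]
        exact freshN_perm π (henv e₀ he₀)
end

section
/- The simplification relation ⟹ on freshness environments is confluent and terminating. -/
set_option maxHeartbeats 1000000

variable {V F : Type}

attribute [local instance] Classical.propDecidable

/-- Simplification of freshness environments (finite sets of freshness assertions
`a ≉ t`): the rewrite relation `⟹` generated by the rules of
Definition "Simplification of freshness environments" (the selected assertion is
required not to occur in the remaining environment, as `⟹` rewrites sets). -/
inductive EStep : Finset (Atom × RawTerm V F) → Finset (Atom × RawTerm V F) → Prop
  | atom (a b : Atom) (E : Finset (Atom × RawTerm V F)) : a ≠ b →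
      (a, RawTerm.atom b) ∉ E →
      EStep (insert (a, RawTerm.atom b) E) E
  | mod (a : Atom) (π : FinPerm) (t : RawTerm V F) (E : Finset (Atom × RawTerm V F)) :
      (a, RawTerm.mod π t) ∉ E →
      EStep (insert (a, RawTerm.mod π t) E) (insert (π⁻¹.1 a, t) E)
  | abs_diff (a b : Atom) (t : RawTerm V F) (E : Finset (Atom × RawTerm V F)) :
      a ≠ b → (a, RawTerm.abs b t) ∉ E →
      EStep (insert (a, RawTerm.abs b t) E) (insert (a, t) E)
  | abs_same (a : Atom) (t : RawTerm V F) (E : Finset (Atom × RawTerm V F)) :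
      (a, RawTerm.abs a t) ∉ E →
      EStep (insert (a, RawTerm.abs a t) E) E
  | unit (a : Atom) (E : Finset (Atom × RawTerm V F)) :
      (a, RawTerm.unit) ∉ E →
      EStep (insert (a, (RawTerm.unit : RawTerm V F)) E) E
  | pair (a : Atom) (t s : RawTerm V F) (E : Finset (Atom × RawTerm V F)) :
      (a, RawTerm.pair t s) ∉ E →
      EStep (insert (a, RawTerm.pair t s) E) (insert (a, t) (insert (a, s) E))
  | app (a : Atom) (f : F) (t : RawTerm V F) (E : Finset (Atom × RawTerm V F)) :
      (a, RawTerm.app f t) ∉ E →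
      EStep (insert (a, RawTerm.app f t) E) (insert (a, t) E)

/-- A freshness assertion is reduced iff it is of the form `a ≉ a` or `a ≉ x` with `x`
a variable; an environment is reduced iff all its assertions are. -/
def ReducedEnv (E : Finset (Atom × RawTerm V F)) : Prop :=
  ∀ p ∈ E, (∃ a : Atom, p = (a, RawTerm.atom a)) ∨
    (∃ (a : Atom) (x : V), p = (a, RawTerm.var x))


/-- Size of a raw term (number of constructors). -/
def tsize : RawTerm V F → ℕ
  | .var _ => 1
  | .atom _ => 1
  | .mod _ t => tsize t + 1
  | .abs _ t => tsize t + 1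
  | .unit => 1
  | .pair t s => tsize t + tsize s + 1
  | .app _ t => tsize t + 1

lemma tsize_pos (t : RawTerm V F) : 0 < tsize t := by
  cases t <;> simp [tsize]

/-- Total size measure of an environment. -/
noncomputable def meas (E : Finset (Atom × RawTerm V F)) : ℕ := ∑ p ∈ E, tsize p.2

lemma meas_insert_le (p : Atom × RawTerm V F) (E : Finset (Atom × RawTerm V F)) :
    meas (insert p E) ≤ tsize p.2 + meas E := by
  by_cases h : p ∈ E
  · rw [Finset.insert_eq_self.2 h]; exact Nat.le_add_left _ _
  · rw [meas, Finset.sum_insert h]; exact le_rfl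

lemma meas_insert_of_notMem {p : Atom × RawTerm V F} {E : Finset (Atom × RawTerm V F)}
    (h : p ∉ E) : meas (insert p E) = tsize p.2 + meas E := by
  rw [meas, Finset.sum_insert h]; rfl

lemma meas_lt {E E' : Finset (Atom × RawTerm V F)} (h : EStep E E') : meas E' < meas E := by
  cases h with
  | atom a b E hab hnm =>
      rw [meas_insert_of_notMem hnm]; dsimp only; have := tsize_pos (V := V) (F := F) (RawTerm.atom b); omega
  | mod a π t E hnm =>
      rw [meas_insert_of_notMem hnm]; dsimp only
      calc meas (insert (π⁻¹.1 a, t) E) ≤ tsize t + meas E := meas_insert_le _ _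
        _ < tsize (RawTerm.mod π t) + meas E := by simp [tsize]
  | abs_diff a b t E hab hnm =>
      rw [meas_insert_of_notMem hnm]; dsimp only
      calc meas (insert (a, t) E) ≤ tsize t + meas E := meas_insert_le _ _
        _ < tsize (RawTerm.abs b t) + meas E := by simp [tsize]
  | abs_same a t E hnm =>
      rw [meas_insert_of_notMem hnm]; dsimp only
      have := tsize_pos (V := V) (F := F) (RawTerm.abs a t)
      omega
  | unit a E hnm =>
      rw [meas_insert_of_notMem hnm]; dsimp only; have := tsize_pos (V := V) (F := F) (RawTerm.unit); omega
  | pair a t s E hnm =>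
      rw [meas_insert_of_notMem hnm]; dsimp only
      calc meas (insert (a, t) (insert (a, s) E))
          ≤ tsize t + meas (insert (a, s) E) := meas_insert_le _ _
        _ ≤ tsize t + (tsize s + meas E) := by
            have := meas_insert_le (V := V) (F := F) (a, s) E; dsimp only at this; omega
        _ < tsize (RawTerm.pair t s) + meas E := by simp [tsize]; omega
  | app a f t E hnm =>
      rw [meas_insert_of_notMem hnm]; dsimp only
      calc meas (insert (a, t) E) ≤ tsize t + meas E := meas_insert_le _ _
        _ < tsize (RawTerm.app f t) + meas E := by simp [tsize]

/-- Normal form of a single freshness assertion. -/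
noncomputable def nfA : Atom → RawTerm V F → Finset (Atom × RawTerm V F)
  | a, .var x => {(a, .var x)}
  | a, .atom b => if a = b then {(a, .atom a)} else ∅
  | a, .mod π t => nfA (π⁻¹.1 a) t
  | a, .abs b t => if a = b then ∅ else nfA a t
  | _, .unit => ∅
  | a, .pair t s => nfA a t ∪ nfA a s
  | a, .app _ t => nfA a t

/-- Normal form of an environment. -/
noncomputable def nf (E : Finset (Atom × RawTerm V F)) : Finset (Atom × RawTerm V F) :=
  E.biUnion fun p => nfA p.1 p.2

lemma nf_insert (p : Atom × RawTerm V F) (E : Finset (Atom × RawTerm V F)) :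
    nf (insert p E) = nfA p.1 p.2 ∪ nf E := Finset.biUnion_insert

lemma nf_step {E E' : Finset (Atom × RawTerm V F)} (h : EStep E E') : nf E = nf E' := by
  cases h with
  | atom a b E hab hnm => rw [nf_insert]; simp [nfA, hab]
  | mod a π t E hnm => rw [nf_insert, nf_insert]; rfl
  | abs_diff a b t E hab hnm => rw [nf_insert, nf_insert]; simp [nfA, hab]
  | abs_same a t E hnm => rw [nf_insert]; simp [nfA]
  | unit a E hnm => rw [nf_insert]; simp [nfA]
  | pair a t s E hnm =>
      rw [nf_insert, nf_insert, nf_insert]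
      simp [nfA, Finset.union_assoc]
  | app a f t E hnm => rw [nf_insert, nf_insert]; rfl

lemma nf_rtg {E E' : Finset (Atom × RawTerm V F)}
    (h : Relation.ReflTransGen EStep E E') : nf E = nf E' := by
  induction h with
  | refl => rfl
  | tail _ hstep ih => exact ih.trans (nf_step hstep)

lemma nf_of_reduced {E : Finset (Atom × RawTerm V F)} (h : ReducedEnv E) : nf E = E := by
  ext q
  simp only [nf, Finset.mem_biUnion]
  constructor
  · rintro ⟨p, hp, hq⟩
    rcases h p hp with ⟨a, rfl⟩ | ⟨a, x, rfl⟩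
    · simp [nfA] at hq; subst hq; exact hp
    · simp [nfA] at hq; subst hq; exact hp
  · intro hq
    refine ⟨q, hq, ?_⟩
    rcases h q hq with ⟨a, rfl⟩ | ⟨a, x, rfl⟩ <;> simp [nfA]

lemma exists_step {E : Finset (Atom × RawTerm V F)} {a : Atom} {t : RawTerm V F}
    (hmem : (a, t) ∈ E)
    (hnr : ¬((∃ b : Atom, (a, t) = (b, RawTerm.atom b)) ∨
      ∃ (b : Atom) (x : V), (a, t) = (b, RawTerm.var x))) :
    ∃ E', EStep E E' := by
  have hne : (a, t) ∉ E.erase (a, t) := Finset.notMem_erase _ _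
  have hE : insert (a, t) (E.erase (a, t)) = E := Finset.insert_erase hmem
  cases t with
  | var x => exact absurd (Or.inr ⟨a, x, rfl⟩) hnr
  | atom b =>
      have hab : a ≠ b := by rintro rfl; exact hnr (Or.inl ⟨a, rfl⟩)
      exact ⟨_, hE ▸ EStep.atom a b _ hab hne⟩
  | mod π t => exact ⟨_, hE ▸ EStep.mod a π t _ hne⟩
  | abs b t =>
      by_cases hab : a = b
      · subst hab; exact ⟨_, hE ▸ EStep.abs_same a t _ hne⟩
      · exact ⟨_, hE ▸ EStep.abs_diff a b t _ hab hne⟩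
  | unit => exact ⟨_, hE ▸ EStep.unit a _ hne⟩
  | pair t s => exact ⟨_, hE ▸ EStep.pair a t s _ hne⟩
  | app f t => exact ⟨_, hE ▸ EStep.app a f t _ hne⟩

lemma toNF (E : Finset (Atom × RawTerm V F)) : Relation.ReflTransGen EStep E (nf E) := by
  generalize hn : meas E = n
  induction n using Nat.strong_induction_on generalizing E with
  | _ n ih =>
    by_cases hred : ReducedEnv E
    · rw [nf_of_reduced hred]
    · simp only [ReducedEnv, not_forall] at hred
      obtain ⟨p, hp, hnr⟩ := hred
      obtain ⟨a, t⟩ := p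
      obtain ⟨E', hE'⟩ := exists_step hp hnr
      have hlt : meas E' < n := hn ▸ meas_lt hE'
      have hrec := ih (meas E') hlt E' rfl
      have hnf : nf E = nf E' := nf_step hE'
      exact Relation.ReflTransGen.head hE' (hnf ▸ hrec)

/-- The simplification relation `⟹` on freshness environments is
confluent and terminating (there is no infinite sequence of `⟹`-steps, i.e. the
converse of `⟹` is well-founded). -/
theorem simplification_confluent_and_terminating (V F : Type) :
    (∀ E E₁ E₂ : Finset (Atom × RawTerm V F),
      Relation.ReflTransGen EStep E E₁ → Relation.ReflTransGen EStep E E₂ →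
      ∃ E₃, Relation.ReflTransGen EStep E₁ E₃ ∧ Relation.ReflTransGen EStep E₂ E₃) ∧
    WellFounded (fun E' E : Finset (Atom × RawTerm V F) => EStep E E') := by
  constructor
  · intro E E₁ E₂ h1 h2
    refine ⟨nf E, ?_, ?_⟩
    · have h := toNF E₁; rwa [← nf_rtg h1] at h
    · have h := toNF E₂; rwa [← nf_rtg h2] at h
  · exact Subrelation.wf (fun {E' E} h => meas_lt h) (InvImage.wf meas Nat.lt_wfRel.wf)
end
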